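/- For any Rota-Baxter ideal I of Ш_k(k), the initial Rota-Baxter ideal in(I) (the Rota-Baxter ideal generated by the initial terms in(f) of all nonzero f ∈ I) has the same coefficient ideals as I: Ω_j(I) = Ω_j(in(I)) for all j ∈ ℕ. -/

import Mathlib

open Finsupp

/-- The basis element `a_m` of the free Rota-Baxter algebra `Ш_k(k)`. -/
noncomputable def aElt {k : Type*} [CommRing k] (m : ℕ) : ℕ →₀ k := Finsupp.single m 1

/-- The product `⋄` of weight `l` on `Ш_k(k)`, defined on basis elements by
`a_m ⋄ a_n = Σ_{i=0}^{min(m,n)} C(m+n−i,m) C(m,i) l^i a_{m+n−i}` and extended bilinearly. -/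
noncomputable def diamond {k : Type*} [CommRing k] (l : k) (f g : ℕ →₀ k) : ℕ →₀ k :=
  f.sum fun m cm => g.sum fun n cn =>
    ∑ i ∈ Finset.range (min m n + 1),
      Finsupp.single (m + n - i) (cm * cn * ((m + n - i).choose m : k) * ((m.choose i : k)) * l ^ i)

/-- The Rota-Baxter operator `P (a_m) = a_{m+1}` on `Ш_k(k)`. -/
noncomputable def RBop {k : Type*} [CommRing k] (f : ℕ →₀ k) : ℕ →₀ k :=
  Finsupp.mapDomain (· + 1) f

/-- A Rota-Baxter ideal of `Ш_k(k)` of weight `l`: a `k`-submodule that is an ideal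
for `⋄` and closed under `P`. -/
def IsRBIdeal {k : Type*} [CommRing k] (l : k) (I : Submodule k (ℕ →₀ k)) : Prop :=
  (∀ f g : ℕ →₀ k, g ∈ I → diamond l f g ∈ I) ∧ (∀ f ∈ I, RBop f ∈ I)

/-- The Rota-Baxter ideal of `Ш_k(k)` generated by a set `S`. -/
noncomputable def RBspan {k : Type*} [CommRing k] (l : k) (S : Set (ℕ →₀ k)) :
    Submodule k (ℕ →₀ k) :=
  sInf {J : Submodule k (ℕ →₀ k) | IsRBIdeal l J ∧ S ⊆ J}

/-- The coefficient ideal `Ω_j(I)`: coefficients at `a_j` of elements of `I`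
supported in degrees `≤ j`. -/
def Omega {k : Type*} [CommRing k] (I : Set (ℕ →₀ k)) (j : ℕ) : Set k :=
  {b | ∃ f ∈ I, (∀ i, j < i → f i = 0) ∧ f j = b}

/-- The set of initial terms of nonzero elements of `I`. -/
def initialSet {k : Type*} [CommRing k] (I : Set (ℕ →₀ k)) : Set (ℕ →₀ k) :=
  {g | ∃ f ∈ I, ∃ n : ℕ, (∀ i, n < i → f i = 0) ∧ f n ≠ 0 ∧ g = Finsupp.single n (f n)}



section OmegaAux

variable {k : Type*} [CommRing k]

/-- `Ω_n(I)` as a submodule of `k`. -/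
noncomputable def OmegaSub (I : Submodule k (ℕ →₀ k)) (n : ℕ) : Submodule k k where
  carrier := Omega (I : Set (ℕ →₀ k)) n
  add_mem' := by
    rintro a b ⟨f, hf, hfs, rfl⟩ ⟨g, hg, hgs, rfl⟩
    exact ⟨f + g, I.add_mem hf hg, fun i hi => by
      simp [Finsupp.add_apply, hfs i hi, hgs i hi], by simp⟩
  zero_mem' := ⟨0, I.zero_mem, fun i _ => rfl, rfl⟩
  smul_mem' := by
    rintro c a ⟨f, hf, hfs, rfl⟩
    exact ⟨c • f, I.smul_mem c hf, fun i hi => by simp [hfs i hi], by simp⟩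

lemma RBop_apply_succ (f : ℕ →₀ k) (n : ℕ) : RBop f (n + 1) = f n :=
  Finsupp.mapDomain_apply (add_left_injective 1) f n

lemma RBop_apply_zero (f : ℕ →₀ k) : RBop f 0 = 0 := by
  apply Finsupp.mapDomain_notin_range
  simp

lemma OmegaSub_mono {l : k} {I : Submodule k (ℕ →₀ k)} (hI : IsRBIdeal l I)
    {m n : ℕ} (h : m ≤ n) : OmegaSub I m ≤ OmegaSub I n := by
  induction n, h using Nat.le_induction with
  | base => exact le_rfl
  | succ n hmn ih =>
    refine le_trans ih ?_
    rintro b ⟨f, hf, hfs, rfl⟩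
    refine ⟨RBop f, hI.2 f hf, ?_, (RBop_apply_succ f n).symm ▸ rfl⟩
    intro i hi
    match i, hi with
    | i + 1, hi => rw [RBop_apply_succ]; exact hfs i (by omega)

/-- The submodule of elements all of whose coefficients lie in the
corresponding coefficient ideals of `I`. -/
noncomputable def Jmod (I : Submodule k (ℕ →₀ k)) : Submodule k (ℕ →₀ k) where
  carrier := {g | ∀ n, g n ∈ OmegaSub I n}
  add_mem' := by
    intro a b ha hb n
    rw [Finsupp.add_apply]
    exact add_mem (ha n) (hb n)
  zero_mem' := fun n => by simpa using (OmegaSub I n).zero_mem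
  smul_mem' := by
    intro c g hg n
    rw [Finsupp.smul_apply]
    exact Submodule.smul_mem _ c (hg n)

lemma single_mem_Jmod {I : Submodule k (ℕ →₀ k)} {b : k} {n : ℕ}
    (hb : b ∈ OmegaSub I n) : Finsupp.single n b ∈ Jmod I := by
  intro m
  rw [Finsupp.single_apply]
  split
  · next h => exact h ▸ hb
  · exact zero_mem _

lemma isRBIdeal_Jmod {l : k} {I : Submodule k (ℕ →₀ k)} (hI : IsRBIdeal l I) :
    IsRBIdeal l (Jmod I) := by
  constructor
  · intro h g hg
    unfold diamond
    refine Submodule.finsuppSum_mem _ _ _ _ fun m _ => ?_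
    refine Submodule.finsuppSum_mem _ _ _ _ fun n _ => ?_
    refine Submodule.sum_mem _ fun i hi => ?_
    apply single_mem_Jmod
    have hin : i ≤ min m n := Nat.lt_succ_iff.mp (Finset.mem_range.mp hi)
    have key : h m * g n * ((m + n - i).choose m : k) * (m.choose i : k) * l ^ i
        = (h m * ((m + n - i).choose m : k) * (m.choose i : k) * l ^ i) • g n := by
      simp [smul_eq_mul]; ring
    rw [key]
    exact OmegaSub_mono hI (by omega) (Submodule.smul_mem _ _ (hg n))
  · intro g hg n
    match n with
    | 0 => rw [RBop_apply_zero]; exact zero_mem _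
    | n + 1 =>
      rw [RBop_apply_succ]
      exact OmegaSub_mono hI (Nat.le_succ n) (hg n)

lemma initialSet_subset_Jmod {I : Submodule k (ℕ →₀ k)} :
    initialSet (I : Set (ℕ →₀ k)) ⊆ Jmod I := by
  rintro g ⟨f, hf, n, hfs, hfn, rfl⟩
  exact single_mem_Jmod ⟨f, hf, hfs, rfl⟩

end OmegaAux

/-- A Rota-Baxter ideal `I` of `Ш_k(k)` and its initial Rota-Baxter ideal `in(I)`
(the Rota-Baxter ideal generated by the initial terms of nonzero elements of `I`)
have the same coefficient ideals: `Ω_j(I) = Ω_j(in(I))` for all `j`. -/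
theorem omega_initial_eq {k : Type*} [CommRing k] (l : k) (I : Submodule k (ℕ →₀ k))
    (hI : IsRBIdeal l I) (j : ℕ) :
    Omega (I : Set (ℕ →₀ k)) j
      = Omega ((RBspan l (initialSet (I : Set (ℕ →₀ k)))) : Set (ℕ →₀ k)) j := by
  ext b
  constructor
  · rintro ⟨f, hf, hfs, rfl⟩
    by_cases hb : f j = 0
    · exact hb ▸ ⟨0, Submodule.zero_mem _, fun i _ => rfl, rfl⟩
    · refine ⟨Finsupp.single j (f j), ?_, ?_, by simp⟩
      · show _ ∈ RBspan l (initialSet (I : Set (ℕ →₀ k)))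
        rw [RBspan, Submodule.mem_sInf]
        rintro J ⟨-, hS⟩
        exact hS ⟨f, hf, j, hfs, hb, rfl⟩
      · intro i hi
        rw [Finsupp.single_apply, if_neg (by omega)]
  · rintro ⟨g, hg, hgs, rfl⟩
    have hle : RBspan l (initialSet (I : Set (ℕ →₀ k))) ≤ Jmod I :=
      sInf_le ⟨isRBIdeal_Jmod hI, initialSet_subset_Jmod⟩
    exact hle hg j
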